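/- Let A → B be a ring homomorphism of commutative rings making B into a finitely generated projective A-module of constant rank 1 (i.e., B is an invertible A-module). Then A → B is an isomorphism. -/

import Mathlib

open TensorProduct

/-- Local case: over a local ring, a finite projective algebra which is "invertible"
(tensoring with some module gives the base ring) has surjective structure map. -/
theorem aux_surj_local (R B C : Type*) [CommRing R] [IsLocalRing R]
    [CommRing B] [Algebra R B] [Module.Finite R B] [Module.Projective R B]
    [AddCommGroup C] [Module R C] (e : (B ⊗[R] C) ≃ₗ[R] R) :
    Function.Surjective (algebraMap R B) := by
  classical
  have hFP : Module.FinitePresentation R B := Module.finitePresentation_of_projective R B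
  have hfree : Module.Free R B := Module.free_of_flat_of_isLocalRing
  let ι := Module.Free.ChooseBasisIndex R B
  let b : Module.Basis ι R B := Module.Free.chooseBasis R B
  let E : R ≃ₗ[R] (ι →₀ C) :=
    e.symm ≪≫ₗ TensorProduct.congr b.repr (LinearEquiv.refl R C) ≪≫ₗ
      TensorProduct.finsuppScalarLeft R C ι
  have hne : Nonempty ι := by
    by_contra h
    rw [not_nonempty_iff] at h
    have hsub : Subsingleton R := E.toEquiv.subsingleton
    exact false_of_nontrivial_of_subsingleton R
  obtain ⟨i₀⟩ := hne
  -- C is a retract of R, hence finite projective, hence free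
  let i : C →ₗ[R] R := E.symm.toLinearMap ∘ₗ Finsupp.lsingle i₀
  let q : R →ₗ[R] C := (Finsupp.lapply i₀) ∘ₗ E.toLinearMap
  have hqi : q ∘ₗ i = LinearMap.id := by
    ext c
    simp [i, q]
  have hCproj : Module.Projective R C := Module.Projective.of_split i q hqi
  have hCfin : Module.Finite R C := by
    refine Module.Finite.of_surjective q (fun c => ⟨i c, ?_⟩)
    have := LinearMap.congr_fun hqi c
    simpa using this
  have hCFP : Module.FinitePresentation R C := Module.finitePresentation_of_projective R C
  have hCfree : Module.Free R C := Module.free_of_flat_of_isLocalRing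
  -- rank computation : card ι = 1
  let κ := Module.Free.ChooseBasisIndex R C
  let cb : Module.Basis κ R C := Module.Free.chooseBasis R C
  let F : R ≃ₗ[R] (ι × κ →₀ R) :=
    E ≪≫ₗ Finsupp.mapRange.linearEquiv cb.repr ≪≫ₗ (Finsupp.finsuppProdLEquiv R).symm
  have hcard : Fintype.card (ι × κ) = 1 := by
    have h1 := (Module.finrank_eq_card_basis (Module.Basis.ofRepr F)).symm
    rwa [Module.finrank_self] at h1
  have hcard1 : Fintype.card ι = 1 := by
    rw [Fintype.card_prod] at hcard
    exact Nat.eq_one_of_mul_eq_one_right hcard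
  obtain ⟨j, hj⟩ := Fintype.card_eq_one_iff.mp hcard1
  -- every element is a multiple of the single basis vector
  have hrepr : ∀ x : B, x = b.repr x j • b j := by
    intro x
    have h := b.sum_repr x
    rw [Fintype.sum_eq_single j (fun y hy => absurd (hj y) hy)] at h
    exact h.symm
  set a := b.repr 1 j with ha_def
  set c := b.repr (b j * b j) j with hc_def
  have h1 : (1 : B) = a • b j := hrepr 1
  have h2 : b j * b j = c • b j := hrepr (b j * b j)
  have hbj : b j = (a * c) • b j := by
    calc b j = b j * 1 := (mul_one _).symm
      _ = b j * (a • b j) := by rw [← h1]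
      _ = a • (b j * b j) := mul_smul_comm a (b j) (b j)
      _ = a • (c • b j) := by rw [h2]
      _ = (a * c) • b j := smul_smul a c (b j)
  have hac : a * c = 1 := by
    have h := congrArg (fun z => b.repr z j) hbj
    simpa [Module.Basis.repr_self] using h.symm
  -- conclude surjectivity
  intro x
  refine ⟨b.repr x j * c, ?_⟩
  have hc1 : c • (1 : B) = b j := by
    calc c • (1 : B) = c • (a • b j) := by rw [← h1]
      _ = (c * a) • b j := smul_smul c a (b j)
      _ = (a * c) • b j := by rw [mul_comm]
      _ = b j := hbj.symm
  rw [Algebra.algebraMap_eq_smul_one, mul_smul, hc1]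
  exact (hrepr x).symm

theorem stmt_9 (A B : Type*) [CommRing A] [CommRing B] [Algebra A B]
    [Module.Finite A B] [Module.Projective A B]
    (hinv : ∃ (C : Type) (_ : AddCommGroup C) (_ : Module A C),
      Nonempty ((TensorProduct A B C) ≃ₗ[A] A)) :
    Function.Bijective (algebraMap A B) := by
  obtain ⟨C, _, _, ⟨e⟩⟩ := hinv
  constructor
  · rw [injective_iff_map_eq_zero]
    intro a ha
    have key : ∀ t : B ⊗[A] C, a • t = 0 := by
      intro t
      induction t using TensorProduct.induction_on with
      | zero => simp
      | tmul x y =>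
          rw [TensorProduct.smul_tmul']
          have hx : a • x = 0 := by rw [Algebra.smul_def, ha, zero_mul]
          rw [hx, TensorProduct.zero_tmul]
      | add x y hx hy => rw [smul_add, hx, hy, add_zero]
    have h := key (e.symm 1)
    have h2 : a • (1 : A) = 0 := by
      conv_lhs => rw [← e.apply_symm_apply 1, ← map_smul, h, map_zero]
    simpa using h2
  · -- surjectivity: check after localization at each maximal ideal
    have hsurj : Function.Surjective (Algebra.linearMap A B) := by
      apply surjective_of_localized_maximal
      intro P hP
      set S := P.primeCompl
      let R' := Localization.AtPrime P
      have hfin : Module.Finite R' (LocalizedModule S B) :=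
        Module.Finite.of_isLocalizedModule S (LocalizedModule.mkLinearMap S B)
      have hproj : Module.Projective R' (LocalizedModule S B) :=
        Module.projective_of_isLocalizedModule S (LocalizedModule.mkLinearMap S B)
      let gB : (R' ⊗[A] B) ≃ₗ[R'] LocalizedModule S B :=
        (IsLocalizedModule.isBaseChange S R' (LocalizedModule.mkLinearMap S B)).equiv
      let gC : (R' ⊗[A] C) ≃ₗ[R'] LocalizedModule S C :=
        (IsLocalizedModule.isBaseChange S R' (LocalizedModule.mkLinearMap S C)).equiv
      let E : ((LocalizedModule S B) ⊗[R'] (LocalizedModule S C)) ≃ₗ[R'] R' :=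
        (TensorProduct.congr gB gC).symm ≪≫ₗ
          (TensorProduct.AlgebraTensorModule.distribBaseChange A R' B C).symm ≪≫ₗ
          TensorProduct.AlgebraTensorModule.congr (LinearEquiv.refl R' R') e ≪≫ₗ
          TensorProduct.AlgebraTensorModule.rid A R' R'
      have hA1 : ∀ (r : R') (x y : LocalizedModule S B), (r • x) * y = r • (x * y) := fun r x y => by
        induction r using Localization.induction_on with | H p =>
        obtain ⟨a, t⟩ := p
        induction x using LocalizedModule.induction_on with | h m s =>
        induction y using LocalizedModule.induction_on with | h n u =>
        rw [LocalizedModule.mk_mul_mk, LocalizedModule.mk_smul_mk, LocalizedModule.mk_smul_mk, LocalizedModule.mk_mul_mk, smul_mul_assoc, mul_assoc]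
      have hA2 : ∀ (r : R') (x y : LocalizedModule S B), x * (r • y) = r • (x * y) := fun r x y => by
        induction r using Localization.induction_on with | H p =>
        obtain ⟨a, t⟩ := p
        induction x using LocalizedModule.induction_on with | h m s =>
        induction y using LocalizedModule.induction_on with | h n u =>
        rw [LocalizedModule.mk_mul_mk, LocalizedModule.mk_smul_mk, LocalizedModule.mk_smul_mk, LocalizedModule.mk_mul_mk, mul_smul_comm, mul_left_comm s t]
      letI : Algebra R' (LocalizedModule S B) := Algebra.ofModule hA1 hA2
      have hs := aux_surj_local R' (LocalizedModule S B) (LocalizedModule S C) E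
      intro x
      obtain ⟨y, hy⟩ := hs x
      obtain ⟨⟨a, s⟩, rfl⟩ := IsLocalization.mk'_surjective S y
      refine ⟨LocalizedModule.mk a s, ?_⟩
      rw [LocalizedModule.map_mk]
      beta_reduce at hy
      rw [Algebra.algebraMap_eq_smul_one, ← Localization.mk_eq_mk', show (1 : LocalizedModule S B) = LocalizedModule.mk 1 1 from OreLocalization.one_def, LocalizedModule.mk_smul_mk] at hy
      simpa [Algebra.linearMap_apply, Algebra.algebraMap_eq_smul_one] using hy
    intro x
    obtain ⟨a, ha⟩ := hsurj x
    exact ⟨a, ha⟩
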